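/- arXiv:2307.10815 — 2 statements merged into one kernel-verified Lean document; each statement's English description precedes it below -/
import Mathlib

section
/- Let g ∈ ℝ^N, S ≤ N, let g_sp be g with all but the top-S magnitude entries set to zero, let g_S ∈ ℝ^S be those top-S values with sample mean μ_S and sample variance ν_S, and let ĝ be the reconstruction obtained by inserting an estimate ĝ_S (with E[‖g_S − ĝ_S‖²] = S ν_S (1 − γ²/ψ)) into the top-S positions. Then E[‖g − ĝ‖²] = ‖g‖² − (γ²/ψ)‖g_S‖² − S μ_S² (1 − γ²/ψ). -/
open MeasureTheory

/-- MSE of the full reconstruction (eq. (23)): with `g_sp` the top-`S`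
sparsification of `g` (positions given by the sorting permutation `σ`),
`g_S` the top-`S` value vector with sample mean `μ_S` and variance `ν_S`,
and `ĝ` obtained by inserting an estimate `ĝ_S` with
`E[‖g_S − ĝ_S‖²] = S·ν_S·(1 − γ²/ψ)` into the top-`S` positions,
`E[‖g − ĝ‖²] = ‖g‖² − (γ²/ψ)‖g_S‖² − S·μ_S²·(1 − γ²/ψ)`. -/
theorem full_reconstruction_mse {Ω : Type*} [MeasureSpace Ω]
    (P : Measure Ω) [IsProbabilityMeasure P]
    (N S : ℕ) (hS : 0 < S) (hSN : S ≤ N) (g : Fin N → ℝ)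
    (σ : Equiv.Perm (Fin N))
    (hsort : ∀ i j : Fin N, i ≤ j → |g (σ j)| ≤ |g (σ i)|)
    (gS : Fin S → ℝ) (hgS : ∀ i : Fin S, gS i = g (σ (Fin.castLE hSN i)))
    (μS νS γ ψ : ℝ)
    (hμS : μS = (∑ i, gS i) / S)
    (hνS : νS = (∑ i, (gS i) ^ 2) / S - μS ^ 2)
    (gShat : Ω → Fin S → ℝ)
    (hint : ∀ i, Integrable (fun ω => (gS i - gShat ω i) ^ 2) P)
    (hmse : (∫ ω, ∑ i, (gS i - gShat ω i) ^ 2 ∂P) = (S : ℝ) * νS * (1 - γ ^ 2 / ψ))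
    (ghat : Ω → Fin N → ℝ)
    (hins : ∀ ω (i : Fin S), ghat ω (σ (Fin.castLE hSN i)) = gShat ω i)
    (hzero : ∀ ω (j : Fin N), (∀ i : Fin S, σ (Fin.castLE hSN i) ≠ j) →
      ghat ω j = 0) :
    (∫ ω, ∑ j, (g j - ghat ω j) ^ 2 ∂P) =
      (∑ j, (g j) ^ 2) - (γ ^ 2 / ψ) * (∑ i, (gS i) ^ 2)
        - (S : ℝ) * μS ^ 2 * (1 - γ ^ 2 / ψ) := by

  classical
  set e : Fin S → Fin N := fun i => σ (Fin.castLE hSN i) with he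
  have hinj : Function.Injective e := fun a b h =>
    Fin.castLE_injective hSN (σ.injective h)
  set T : Finset (Fin N) := Finset.univ.image e with hT
  have hS0 : (S : ℝ) ≠ 0 := Nat.cast_ne_zero.mpr hS.ne'
  have hsum1 : ∀ ω, ∑ j ∈ T, (g j - ghat ω j) ^ 2 = ∑ i, (gS i - gShat ω i) ^ 2 := by
    intro ω
    rw [hT, Finset.sum_image (fun a _ b _ h => hinj h)]
    exact Finset.sum_congr rfl fun i _ => by rw [hgS, hins]
  have hsum2 : ∀ ω, ∑ j ∈ Tᶜ, (g j - ghat ω j) ^ 2 = ∑ j ∈ Tᶜ, (g j) ^ 2 := by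
    intro ω
    refine Finset.sum_congr rfl fun j hj => ?_
    rw [hzero ω j]
    · ring
    · intro i h
      exact (Finset.mem_compl.mp hj) (Finset.mem_image.mpr ⟨i, Finset.mem_univ i, h⟩)
  have hsumg : ∑ j ∈ T, (g j) ^ 2 = ∑ i, (gS i) ^ 2 := by
    rw [hT, Finset.sum_image (fun a _ b _ h => hinj h)]
    exact Finset.sum_congr rfl fun i _ => by rw [hgS]
  have hpt : ∀ ω, ∑ j, (g j - ghat ω j) ^ 2
      = ∑ i, (gS i - gShat ω i) ^ 2 + (∑ j, (g j) ^ 2 - ∑ i, (gS i) ^ 2) := by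
    intro ω
    rw [← Finset.sum_add_sum_compl T, hsum1, hsum2,
      ← Finset.sum_add_sum_compl T (fun j => (g j) ^ 2), hsumg]
    ring
  have hInt : Integrable (fun ω => ∑ i, (gS i - gShat ω i) ^ 2) P :=
    integrable_finset_sum _ fun i _ => hint i
  have hSν : (S : ℝ) * νS = ∑ i, (gS i) ^ 2 - (S : ℝ) * μS ^ 2 := by
    rw [hνS]; field_simp
  calc ∫ ω, ∑ j, (g j - ghat ω j) ^ 2 ∂P
      = ∫ ω, (∑ i, (gS i - gShat ω i) ^ 2 + (∑ j, (g j) ^ 2 - ∑ i, (gS i) ^ 2)) ∂P :=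
        integral_congr_ae (Filter.Eventually.of_forall hpt)
    _ = (S : ℝ) * νS * (1 - γ ^ 2 / ψ) + (∑ j, (g j) ^ 2 - ∑ i, (gS i) ^ 2) := by
        rw [integral_add hInt (integrable_const _), hmse, integral_const]
        simp
    _ = _ := by rw [hSν]; ring
end

section
/- Suppose for each device k and each iteration t, the residual Δ_k^{(t)} satisfies Δ_k^{(0)} = 0 and E[‖Δ_k^{(t)}‖²] ≤ (1−ζ_k)·E[‖∇F_k^{(t)} + Δ_k^{(t−1)}‖²] where ζ_k ∈ (0,1) and E[‖∇F_k^{(t)}‖²] ≤ ε². Then E[‖Δ_k^{(t)}‖²] ≤ 4(1−ζ_k)ε²/ζ_k² for all t. -/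
open MeasureTheory

/-- Young-type inequality: `(x+y)² ≤ (1+c)x² + (1+d)y²` when `c*d = 1`. -/
lemma young_sq (c d x y : ℝ) (hc : 0 < c) (hd : 0 < d) (hcd : c * d = 1) :
    (x + y) ^ 2 ≤ (1 + c) * x ^ 2 + (1 + d) * y ^ 2 := by
  have h1 : 0 ≤ c * (x - d * y) ^ 2 := by positivity
  have h2 : c * (x - d * y) ^ 2 = c * x ^ 2 - 2 * (c * d) * (x * y) + (c * d) * d * y ^ 2 := by
    ring
  rw [hcd] at h2
  nlinarith [h1, h2]

/-- Lemma 1 (residual error bound with error feedback): if `Δ⁰ = 0`,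
`E[‖Δᵗ⁺¹‖²] ≤ (1−ζ)·E[‖∇Fᵗ⁺¹ + Δᵗ‖²]` with `ζ ∈ (0,1)` and
`E[‖∇Fᵗ‖²] ≤ ε²`, then `E[‖Δᵗ‖²] ≤ 4(1−ζ)ε²/ζ²` for all `t`. -/
theorem residual_error_bound {Ω : Type*} [MeasureSpace Ω]
    (P : Measure Ω) [IsProbabilityMeasure P] (N : ℕ)
    (Δ G : ℕ → Ω → EuclideanSpace ℝ (Fin N))
    (ζ ε : ℝ) (hζ0 : 0 < ζ) (hζ1 : ζ < 1) (hε : 0 < ε)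
    (hΔ0 : ∀ ω, Δ 0 ω = 0)
    (hintΔ : ∀ t, Integrable (fun ω => ‖Δ t ω‖ ^ 2) P)
    (hintG : ∀ t, Integrable (fun ω => ‖G t ω‖ ^ 2) P)
    (hintGΔ : ∀ t, Integrable (fun ω => ‖G (t + 1) ω + Δ t ω‖ ^ 2) P)
    (hrec : ∀ t, (∫ ω, ‖Δ (t + 1) ω‖ ^ 2 ∂P) ≤
      (1 - ζ) * ∫ ω, ‖G (t + 1) ω + Δ t ω‖ ^ 2 ∂P)
    (hG : ∀ t, (∫ ω, ‖G t ω‖ ^ 2 ∂P) ≤ ε ^ 2) :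
    ∀ t, (∫ ω, ‖Δ t ω‖ ^ 2 ∂P) ≤ 4 * (1 - ζ) * ε ^ 2 / ζ ^ 2 := by
  have hζ' : 0 < 1 - ζ := by linarith
  set B : ℝ := 4 * (1 - ζ) * ε ^ 2 / ζ ^ 2 with hBdef
  set c : ℝ := 2 * (1 - ζ) / ζ with hcdef
  set d : ℝ := ζ / (2 * (1 - ζ)) with hddef
  have hc : 0 < c := by positivity
  have hd : 0 < d := by positivity
  have hcd : c * d = 1 := by
    rw [hcdef, hddef, div_mul_div_comm, mul_comm ζ,
      div_self (mul_ne_zero (mul_ne_zero two_ne_zero hζ'.ne') hζ0.ne')]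
  intro t
  induction t with
  | zero =>
    have h0 : (∫ ω, ‖Δ 0 ω‖ ^ 2 ∂P) = 0 := by simp [hΔ0]
    rw [h0, hBdef]
    exact div_nonneg (by nlinarith [sq_nonneg ε]) (by positivity)
  | succ t ih =>
    -- pointwise Young inequality
    have hpt : ∀ ω, ‖G (t + 1) ω + Δ t ω‖ ^ 2 ≤
        (1 + c) * ‖G (t + 1) ω‖ ^ 2 + (1 + d) * ‖Δ t ω‖ ^ 2 := by
      intro ω
      have h1 : ‖G (t + 1) ω + Δ t ω‖ ^ 2 ≤ (‖G (t + 1) ω‖ + ‖Δ t ω‖) ^ 2 := by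
        have := norm_add_le (G (t + 1) ω) (Δ t ω)
        nlinarith [norm_nonneg (G (t + 1) ω + Δ t ω)]
      exact h1.trans (young_sq c d _ _ hc hd hcd)
    have hintRHS : Integrable
        (fun ω => (1 + c) * ‖G (t + 1) ω‖ ^ 2 + (1 + d) * ‖Δ t ω‖ ^ 2) P :=
      ((hintG (t + 1)).const_mul _).add ((hintΔ t).const_mul _)
    have hmono : (∫ ω, ‖G (t + 1) ω + Δ t ω‖ ^ 2 ∂P) ≤
        (1 + c) * (∫ ω, ‖G (t + 1) ω‖ ^ 2 ∂P) + (1 + d) * (∫ ω, ‖Δ t ω‖ ^ 2 ∂P) := by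
      calc (∫ ω, ‖G (t + 1) ω + Δ t ω‖ ^ 2 ∂P)
          ≤ ∫ ω, ((1 + c) * ‖G (t + 1) ω‖ ^ 2 + (1 + d) * ‖Δ t ω‖ ^ 2) ∂P :=
            integral_mono (hintGΔ t) hintRHS hpt
        _ = (1 + c) * (∫ ω, ‖G (t + 1) ω‖ ^ 2 ∂P) + (1 + d) * (∫ ω, ‖Δ t ω‖ ^ 2 ∂P) := by
            rw [integral_add ((hintG (t + 1)).const_mul _) ((hintΔ t).const_mul _),
              integral_const_mul, integral_const_mul]
    have h1c : 0 < 1 + c := by linarith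
    have h1d : 0 < 1 + d := by linarith
    have step : (∫ ω, ‖Δ (t + 1) ω‖ ^ 2 ∂P) ≤
        (1 - ζ) * ((1 + c) * ε ^ 2 + (1 + d) * B) := by
      refine (hrec t).trans ?_
      have h2 : (1 + c) * (∫ ω, ‖G (t + 1) ω‖ ^ 2 ∂P) + (1 + d) * (∫ ω, ‖Δ t ω‖ ^ 2 ∂P)
          ≤ (1 + c) * ε ^ 2 + (1 + d) * B :=
        add_le_add (mul_le_mul_of_nonneg_left (hG (t + 1)) h1c.le)
          (mul_le_mul_of_nonneg_left ih h1d.le)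
      exact mul_le_mul_of_nonneg_left (hmono.trans h2) hζ'.le
    refine step.trans ?_
    rw [hBdef, hcdef, hddef]
    have hζne : ζ ≠ 0 := hζ0.ne'
    have h2ne : (1 : ℝ) - ζ ≠ 0 := hζ'.ne'
    rw [le_div_iff₀ (by positivity : (0:ℝ) < ζ ^ 2)]
    field_simp
    have h5 : (0:ℝ) ≤ 2 * ((1 - ζ) * ε) ^ 2 * ζ ^ 5 := by positivity
    nlinarith [h5]
end
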